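/- For every k ∈ ℕ, the projected LMS update satisfies the one-step contraction inequality ‖θ̂_{k+1} − θ*‖² ≤ ‖θ̂_k − θ*‖² − μ‖D_k(θ* − θ̂_k)‖² + μ‖w_k‖². -/

import Mathlib

open Matrix Finset RealInnerProductSpace

/-- Euclidean norm of a vector in `ℝ^n`. -/
noncomputable def vnorm {n : ℕ} (v : Fin n → ℝ) : ℝ := Real.sqrt (∑ i, v i ^ 2)

/-- Spectral norm (ℓ²-operator norm) of a matrix. -/
noncomputable def specNorm {n d : ℕ} (D : Matrix (Fin n) (Fin d) ℝ) : ℝ :=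
  ‖LinearMap.toContinuousLinearMap (Matrix.toEuclideanLin D)‖

lemma vnorm_eq {m : ℕ} (v : Fin m → ℝ) :
    vnorm v = ‖(WithLp.equiv 2 (Fin m → ℝ)).symm v‖ := by
  rw [vnorm, EuclideanSpace.norm_eq]
  congr 1
  refine Finset.sum_congr rfl fun i _ => ?_
  simp [Real.norm_eq_abs, sq_abs]

lemma adj_inner {n d : ℕ} (D : Matrix (Fin n) (Fin d) ℝ)
    (z : EuclideanSpace ℝ (Fin n)) (x : EuclideanSpace ℝ (Fin d)) :
    ⟪Matrix.toEuclideanLin Dᵀ z, x⟫ = ⟪z, Matrix.toEuclideanLin D x⟫ := by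
  simp only [PiLp.inner_apply, RCLike.inner_apply, conj_trivial,
    Matrix.toEuclideanLin_apply]
  simp only [Matrix.mulVec, dotProduct,
    Matrix.transpose_apply, Finset.sum_mul, Finset.mul_sum]
  rw [Finset.sum_comm]
  refine Finset.sum_congr rfl fun i _ => Finset.sum_congr rfl fun j _ => by ring

lemma opbound {n d : ℕ} (D : Matrix (Fin n) (Fin d) ℝ) (x : EuclideanSpace ℝ (Fin d)) :
    ‖Matrix.toEuclideanLin D x‖ ≤ specNorm D * ‖x‖ := by
  have := (LinearMap.toContinuousLinearMap (Matrix.toEuclideanLin D)).le_opNorm x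
  simpa [specNorm] using this

lemma opbound_t {n d : ℕ} (D : Matrix (Fin n) (Fin d) ℝ) (z : EuclideanSpace ℝ (Fin n)) :
    ‖Matrix.toEuclideanLin Dᵀ z‖ ≤ specNorm D * ‖z‖ := by
  have hs : (0:ℝ) ≤ specNorm D := norm_nonneg _
  rcases eq_or_lt_of_le (norm_nonneg (Matrix.toEuclideanLin Dᵀ z)) with h | h
  · rw [← h]; exact mul_nonneg hs (norm_nonneg _)
  · have h1 : ‖Matrix.toEuclideanLin Dᵀ z‖ * ‖Matrix.toEuclideanLin Dᵀ z‖
        = ⟪z, Matrix.toEuclideanLin D (Matrix.toEuclideanLin Dᵀ z)⟫ := by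
      rw [← adj_inner, real_inner_self_eq_norm_mul_norm]
    have h2 : ⟪z, Matrix.toEuclideanLin D (Matrix.toEuclideanLin Dᵀ z)⟫
        ≤ ‖z‖ * (specNorm D * ‖Matrix.toEuclideanLin Dᵀ z‖) :=
      (real_inner_le_norm _ _).trans (by
        have := opbound D (Matrix.toEuclideanLin Dᵀ z)
        nlinarith [norm_nonneg z])
    have := h1.trans_le h2
    nlinarith

set_option maxHeartbeats 1000000 in
/-- one-step contraction of the projected LMS update. -/
theorem lms_one_step_contraction
    {d n : ℕ} (hd : 1 ≤ d) (hn : 1 ≤ n)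
    (Θ : Set (Fin d → ℝ)) (hΘne : Θ.Nonempty) (hΘcomp : IsCompact Θ) (hΘconv : Convex ℝ Θ)
    (θstar : Fin d → ℝ) (hθstar : θstar ∈ Θ)
    (μ : ℝ) (hμ : 0 < μ)
    (D : ℕ → Matrix (Fin n) (Fin d) ℝ) (hD : ∀ k, μ * specNorm (D k) ^ 2 ≤ 1)
    (w : ℕ → (Fin n → ℝ))
    (θhat θtil : ℕ → (Fin d → ℝ))
    (hθ0 : θhat 0 ∈ Θ)
    (hupd : ∀ k, θtil (k + 1) =
      θhat k + μ • (D k)ᵀ.mulVec ((D k).mulVec (θstar - θhat k) + w k))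
    (hproj_mem : ∀ k, θhat (k + 1) ∈ Θ)
    (hproj : ∀ k, ∀ θ ∈ Θ, vnorm (θhat (k + 1) - θtil (k + 1)) ≤ vnorm (θ - θtil (k + 1))) :
    ∀ k : ℕ,
      vnorm (θhat (k + 1) - θstar) ^ 2 ≤
        vnorm (θhat k - θstar) ^ 2 - μ * vnorm ((D k).mulVec (θstar - θhat k)) ^ 2 +
          μ * vnorm (w k) ^ 2 := by
  intro k
  set ι := (WithLp.linearEquiv 2 ℝ (Fin d → ℝ)).symm with hι
  set ιn := (WithLp.linearEquiv 2 ℝ (Fin n → ℝ)).symm with hιn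
  have hιeq : ∀ v : Fin d → ℝ, ι v = (WithLp.equiv 2 (Fin d → ℝ)).symm v := fun _ => rfl
  have hιneq : ∀ v : Fin n → ℝ, ιn v = (WithLp.equiv 2 (Fin n → ℝ)).symm v := fun _ => rfl
  have hv : ∀ v : Fin d → ℝ, vnorm v = ‖ι v‖ := fun v => by rw [vnorm_eq, hιeq]
  have hvn : ∀ v : Fin n → ℝ, vnorm v = ‖ιn v‖ := fun v => by rw [vnorm_eq, hιneq]
  set L := Matrix.toEuclideanLin (D k) with hL
  set Lt := Matrix.toEuclideanLin (D k)ᵀ with hLt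
  have hLapp : ∀ v : Fin d → ℝ, L (ι v) = ιn ((D k).mulVec v) := fun v => rfl
  have hLtapp : ∀ v : Fin n → ℝ, Lt (ιn v) = ι ((D k)ᵀ.mulVec v) := fun v => rfl
  set P := ι (θhat (k + 1)) with hP
  set u := ι (θtil (k + 1)) with hu
  set t := ι θstar with ht
  set σ := ι (θstar - θhat k) with hσ
  set ω := ιn (w k) with hω
  -- update equation in E
  have hupdE : u - t = -σ + μ • Lt (L σ + ω) := by
    rw [hu, hupd k, ht]
    have : ι (θhat k + μ • (D k)ᵀ.mulVec ((D k).mulVec (θstar - θhat k) + w k))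
        = ι (θhat k) + μ • ι ((D k)ᵀ.mulVec ((D k).mulVec (θstar - θhat k) + w k)) := by
      simp [map_add, _root_.map_smul]
    rw [this]
    have h2 : Lt (L σ + ω) = ι ((D k)ᵀ.mulVec ((D k).mulVec (θstar - θhat k) + w k)) := by
      rw [hσ, hω, hLapp, ← map_add, hLtapp]
    rw [h2]
    have h3 : -σ = ι (θhat k) - t := by
      rw [hσ, ht, map_sub]; abel
    rw [h3]; abel
  clear_value L Lt P u t σ ω
  -- projection step
  have hΘconvE : Convex ℝ (ι '' Θ) := hΘconv.linear_image ι.toLinearMap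
  have hPmem : P ∈ ι '' Θ := ⟨_, hproj_mem k, hP.symm⟩
  haveI : Nonempty (ι '' Θ : Set _) := ⟨⟨P, hPmem⟩⟩
  have hmin : ‖u - P‖ = ⨅ z : (ι '' Θ), ‖u - z‖ := by
    refine le_antisymm (le_ciInf fun ⟨z, θ, hθ, hz⟩ => ?_)
      (ciInf_le ⟨0, fun _ ⟨_, h⟩ => h ▸ norm_nonneg _⟩ (⟨P, hPmem⟩ : (ι '' Θ)))
    have := hproj k θ hθ
    rw [hv, hv] at this
    have e1 : ι (θhat (k + 1) - θtil (k + 1)) = P - u := by rw [map_sub, ← hP, ← hu]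
    have e2 : ι (θ - θtil (k + 1)) = ι θ - u := by rw [map_sub, ← hu]
    rw [e1, e2] at this
    calc ‖u - P‖ = ‖P - u‖ := (norm_sub_rev _ _)
    _ ≤ ‖ι θ - u‖ := this
    _ = ‖u - z‖ := by rw [← hz, norm_sub_rev]
  have hVI : ⟪u - P, t - P⟫ ≤ 0 :=
    ((norm_eq_iInf_iff_real_inner_le_zero hΘconvE hPmem).mp hmin) t ⟨θstar, hθstar, ht.symm⟩
  have hstepA : ‖P - t‖ ≤ ‖u - t‖ := by
    have hexp : ‖u - t‖ ^ 2 = ‖u - P‖ ^ 2 + 2 * ⟪u - P, P - t⟫ + ‖P - t‖ ^ 2 := by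
      have h : u - t = (u - P) + (P - t) := by abel
      rw [h, norm_add_sq_real]
    have hflip : ⟪u - P, P - t⟫ = -⟪u - P, t - P⟫ := by
      rw [← inner_neg_right]; congr 1; abel
    nlinarith [norm_nonneg (u - P), norm_nonneg (P - t), norm_nonneg (u - t)]
  -- algebra step
  set ζ := L σ + ω with hζ
  clear_value ζ
  have hinner : ⟪σ, Lt ζ⟫ = ‖L σ‖ ^ 2 + ⟪L σ, ω⟫ := by
    rw [real_inner_comm, hLt, hL, adj_inner, ← hL, hζ, inner_add_left,
      real_inner_self_eq_norm_sq, real_inner_comm ω (L σ)]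
  have hζsq : ‖ζ‖ ^ 2 = ‖L σ‖ ^ 2 + 2 * ⟪L σ, ω⟫ + ‖ω‖ ^ 2 := by
    rw [hζ]; exact norm_add_sq_real (L σ) ω
  have hLtζ : ‖Lt ζ‖ ≤ specNorm (D k) * ‖ζ‖ := by rw [hLt]; exact opbound_t (D k) ζ
  have hexpB : ‖u - t‖ ^ 2 = ‖σ‖ ^ 2 - 2 * μ * ⟪σ, Lt ζ⟫ + μ ^ 2 * ‖Lt ζ‖ ^ 2 := by
    rw [hupdE, norm_add_sq_real, norm_neg, inner_neg_left, real_inner_smul_right,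
      norm_smul]
    simp only [Real.norm_eq_abs, mul_pow, sq_abs]
    ring
  have hμD := hD k
  have hsN : 0 ≤ specNorm (D k) := norm_nonneg _
  have hstepB : ‖u - t‖ ^ 2 ≤ ‖σ‖ ^ 2 - μ * ‖L σ‖ ^ 2 + μ * ‖ω‖ ^ 2 := by
    have h1 : μ ^ 2 * ‖Lt ζ‖ ^ 2 ≤ μ * ‖ζ‖ ^ 2 := by
      have h2 : ‖Lt ζ‖ ^ 2 ≤ specNorm (D k) ^ 2 * ‖ζ‖ ^ 2 := by
        nlinarith [norm_nonneg (Lt ζ), norm_nonneg ζ]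
      calc μ ^ 2 * ‖Lt ζ‖ ^ 2 ≤ μ ^ 2 * (specNorm (D k) ^ 2 * ‖ζ‖ ^ 2) :=
            mul_le_mul_of_nonneg_left h2 (sq_nonneg μ)
        _ = μ * (μ * specNorm (D k) ^ 2) * ‖ζ‖ ^ 2 := by ring
        _ ≤ μ * 1 * ‖ζ‖ ^ 2 :=
            mul_le_mul_of_nonneg_right (mul_le_mul_of_nonneg_left hμD hμ.le) (sq_nonneg ‖ζ‖)
        _ = μ * ‖ζ‖ ^ 2 := by ring
    rw [hexpB, hinner]
    rw [hζsq] at h1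
    nlinarith
  -- combine
  have e1 : vnorm (θhat (k + 1) - θstar) = ‖P - t‖ := by rw [hv, map_sub, ← hP, ← ht]
  have e2 : vnorm (θhat k - θstar) = ‖σ‖ := by
    rw [hv, hσ]
    have h : ι (θhat k - θstar) = -(ι (θstar - θhat k)) := by rw [← map_neg]; congr 1; abel
    rw [h, norm_neg]
  have e3 : vnorm ((D k).mulVec (θstar - θhat k)) = ‖L σ‖ := by rw [hvn, hσ, hLapp]
  have e4 : vnorm (w k) = ‖ω‖ := by rw [hω]; exact hvn _
  rw [e1, e2, e3, e4]
  nlinarith [norm_nonneg (P - t), norm_nonneg (u - t)]
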